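/- For any positive integer j and any graph G, γ_j(G) ≥ min{k ∈ ℤ | Σ_{i=1}^k d_{n−i+1} + (1/2)Σ_{i=k+1}^n (d_{n−i+1} − j) ≥ m(G)}. -/

import Mathlib

open Finset

namespace DSI

variable {V : Type*} (G : SimpleGraph V) [Fintype V] [DecidableEq V] [DecidableRel G.Adj]

/-- The degree sequence of `G`, sorted in non-decreasing order. -/
def dseq : List ℕ := (Finset.univ.val.map (fun v => G.degree v)).sort (· ≤ ·)

/-- The sum of the `k` smallest degrees, `Σ_{i=1}^k d_i`. -/
def sumSmallest (k : ℕ) : ℕ := ((dseq G).take k).sum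

/-- The sum of the `k` largest degrees, `Σ_{i=1}^k d_{n-i+1}`. -/
def sumLargest (k : ℕ) : ℕ := ((dseq G).reverse.take k).sum

/-- The number of edges `m(G)`. -/
def esize : ℕ := G.edgeFinset.card

/-- `m[S]`: the number of edges of the subgraph induced by `S`. -/
def mOn (S : Finset V) : ℕ := (S.sym2.filter (fun e => e ∈ G.edgeSet)).card

/-- A set `I` is `j`-independent if every vertex of `I` has fewer than `j` neighbours in `I`,
i.e. the induced subgraph has maximum degree `< j`. -/
def JIndep (j : ℕ) (I : Finset V) : Prop := ∀ v ∈ I, (I.filter (G.Adj v)).card < j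

/-- The `j`-independence number `α_j(G)`. -/
noncomputable def alphaJ (j : ℕ) : ℕ := sSup {k | ∃ I : Finset V, JIndep G j I ∧ I.card = k}

/-- The family `F` of maximum `j`-independent sets. -/
noncomputable def maxJIndep (j : ℕ) : Set (Finset V) :=
  {S | JIndep G j S ∧ S.card = alphaJ G j}

/-- `max_{S ∈ F} (m[V−S] − m[S])`. -/
noncomputable def fU (j : ℕ) : ℤ :=
  sSup ((fun S : Finset V => (mOn G Sᶜ : ℤ) - (mOn G S : ℤ)) '' maxJIndep G j)

/-- `min_{S ∈ F} (m[V−S] − m[S])`. -/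
noncomputable def fL (j : ℕ) : ℤ :=
  sInf ((fun S : Finset V => (mOn G Sᶜ : ℤ) - (mOn G S : ℤ)) '' maxJIndep G j)

/-- The upper `j`-annihilation number `a_j(G)`. -/
noncomputable def aJ (j : ℕ) : ℕ :=
  sSup {k | k ≤ Fintype.card V ∧ (sumSmallest G k : ℤ) + fU G j ≤ (esize G : ℤ)}

/-- The lower `j`-annihilation number `c_j(G)`. -/
noncomputable def cJ (j : ℕ) : ℕ :=
  sInf {k | k ≤ Fintype.card V ∧ (esize G : ℤ) ≤ (sumLargest G k : ℤ) + fL G j}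

/-- The annihilation number `a(G)`. -/
noncomputable def annihilation : ℕ :=
  sSup {k | k ≤ Fintype.card V ∧ sumSmallest G k ≤ esize G}

/-- An independent set. -/
def IndepSet (I : Finset V) : Prop := ∀ v ∈ I, ∀ w ∈ I, ¬ G.Adj v w

/-- The independence number `α(G)`. -/
noncomputable def alpha : ℕ := sSup {k | ∃ I : Finset V, IndepSet G I ∧ I.card = k}

end DSI
/-- `D` is a `j`-dominating set: every vertex outside `D` has at least `j` neighbours
in `D`. -/
def DSI.JDom {V : Type*} (G : SimpleGraph V) [DecidableEq V] [DecidableRel G.Adj] (j : ℕ) (D : Finset V) : Prop :=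
  ∀ v : V, v ∉ D → j ≤ (D.filter (fun w => G.Adj v w)).card

/-- The `j`-domination number `γ_j(G)`. -/
noncomputable def DSI.gammaJ {V : Type*} (G : SimpleGraph V) [Fintype V]
    [DecidableEq V] [DecidableRel G.Adj] (j : ℕ) : ℕ :=
  sInf {k | ∃ D : Finset V, DSI.JDom G j D ∧ D.card = k}

/-- The family of minimum `j`-dominating sets. -/
noncomputable def DSI.minJDom {V : Type*} (G : SimpleGraph V) [Fintype V]
    [DecidableEq V] [DecidableRel G.Adj] (j : ℕ) : Set (Finset V) :=
  {D | DSI.JDom G j D ∧ D.card = DSI.gammaJ G j}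

/-- `max_{S ∈ F} (m[V−S] − m[S])` over minimum `j`-dominating sets. -/
noncomputable def DSI.fUdom {V : Type*} (G : SimpleGraph V) [Fintype V]
    [DecidableEq V] [DecidableRel G.Adj] (j : ℕ) : ℤ :=
  sSup ((fun S : Finset V => (DSI.mOn G Sᶜ : ℤ) - (DSI.mOn G S : ℤ)) '' DSI.minJDom G j)

/-- `min_{S ∈ F} (m[V−S] − m[S])` over minimum `j`-dominating sets. -/
noncomputable def DSI.fLdom {V : Type*} (G : SimpleGraph V) [Fintype V]
    [DecidableEq V] [DecidableRel G.Adj] (j : ℕ) : ℤ :=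
  sInf ((fun S : Finset V => (DSI.mOn G Sᶜ : ℤ) - (DSI.mOn G S : ℤ)) '' DSI.minJDom G j)

/-- `z_j(G) = max { k | Σ_{i=1}^k d_i + max_{S∈F}(m[V−S]−m[S]) ≤ m(G) }`. -/
noncomputable def DSI.zJ {V : Type*} (G : SimpleGraph V) [Fintype V]
    [DecidableEq V] [DecidableRel G.Adj] (j : ℕ) : ℕ :=
  sSup {k | k ≤ Fintype.card V ∧
    (DSI.sumSmallest G k : ℤ) + DSI.fUdom G j ≤ (DSI.esize G : ℤ)}

/-- `w_j(G) = min { k | Σ_{i=1}^k d_{n-i+1} + min_{S∈F}(m[V−S]−m[S]) ≥ m(G) }`. -/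
noncomputable def DSI.wJ {V : Type*} (G : SimpleGraph V) [Fintype V]
    [DecidableEq V] [DecidableRel G.Adj] (j : ℕ) : ℕ :=
  sInf {k | k ≤ Fintype.card V ∧
    (DSI.esize G : ℤ) ≤ (DSI.sumLargest G k : ℤ) + DSI.fLdom G j}


open List

section ListLemmas

lemma aux_sorted_get_le {l l' : List ℕ} (hl : l.Pairwise (· ≤ ·)) (hl' : l'.Pairwise (· ≤ ·))
    (hle : (↑l' : Multiset ℕ) ≤ ↑l) {i : ℕ} (hi' : i < l'.length) (hi : i < l.length) :
    l[i] ≤ l'[i] := by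
  by_contra hcon
  push_neg at hcon
  set x := l[i] with hx
  have h1 : (l.filter (fun a => decide (a < x))).length ≤ i := by
    conv_lhs => rw [← List.take_append_drop i l]
    rw [List.filter_append, List.length_append]
    have hd : (l.drop i).filter (fun a => decide (a < x)) = [] := by
      rw [List.filter_eq_nil_iff]
      intro a ha
      obtain ⟨k, hk, rfl⟩ := List.mem_iff_getElem.mp ha
      have : l[i] ≤ (l.drop i)[k] := by
        rw [List.getElem_drop]
        rcases Nat.eq_zero_or_pos k with rfl | hkpos
        · simp
        · have := hl.rel_get_of_lt (a := ⟨i, hi⟩)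
            (b := ⟨i + k, by have := hk; simp [List.length_drop] at this; omega⟩)
            (by simp; omega)
          simpa using this
      simp only [decide_eq_true_eq, not_lt]
      exact this
    rw [hd]
    simp only [List.length_nil, Nat.add_zero]
    calc ((l.take i).filter _).length ≤ (l.take i).length := List.length_filter_le _ _
      _ ≤ i := by simp [List.length_take]
  have h2 : i + 1 ≤ (l'.filter (fun a => decide (a < x))).length := by
    conv_rhs => rw [← List.take_append_drop (i+1) l']
    rw [List.filter_append, List.length_append]
    have ht : (l'.take (i+1)).filter (fun a => decide (a < x)) = l'.take (i+1) := by
      rw [List.filter_eq_self]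
      intro a ha
      obtain ⟨k, hk, rfl⟩ := List.mem_iff_getElem.mp ha
      have hk2 : k < i + 1 ∧ k < l'.length := by
        simpa [List.length_take, Nat.lt_min] using hk
      have hk' : k < l'.length := hk2.2
      have hale : (l'.take (i+1))[k] ≤ l'[i] := by
        rw [List.getElem_take]
        have hki : k ≤ i := by omega
        have := hl'.rel_get_of_le (a := ⟨k, hk'⟩) (b := ⟨i, hi'⟩) (by simpa using hki)
        simpa using this
      simp only [decide_eq_true_eq]
      exact lt_of_le_of_lt hale hcon
    rw [ht]
    have : i + 1 ≤ (l'.take (i+1)).length := by simp [List.length_take]; omega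
    omega
  have hcount : (l'.filter (fun a => decide (a < x))).length ≤
      (l.filter (fun a => decide (a < x))).length := by
    have := Multiset.countP_le_of_le (fun a => a < x) hle
    simpa [Multiset.coe_countP, List.countP_eq_length_filter] using this
  omega

lemma aux_sum_take_le {l l' : List ℕ} (hl : l.Pairwise (· ≤ ·)) (hl' : l'.Pairwise (· ≤ ·))
    (hle : (↑l' : Multiset ℕ) ≤ ↑l) :
    (l.take l'.length).sum ≤ l'.sum := by
  have hlen : l'.length ≤ l.length := by simpa using Multiset.card_le_card hle
  apply List.Forall₂.sum_le_sum
  rw [List.forall₂_iff_get]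
  refine ⟨by simp [List.length_take, hlen], fun i h1 h2 => ?_⟩
  simp only [List.get_eq_getElem, List.getElem_take]
  exact aux_sorted_get_le hl hl' hle h2 (lt_of_lt_of_le h2 hlen)

lemma aux_multiset_take_sort {s M : Multiset ℕ} (h : s ≤ M) :
    ((M.sort (· ≤ ·)).take (Multiset.card s)).sum ≤ s.sum := by
  have hs := aux_sum_take_le (Multiset.pairwise_sort M (· ≤ ·)) (Multiset.pairwise_sort s (· ≤ ·))
    (by rw [Multiset.sort_eq, Multiset.sort_eq]; exact h)
  have h1 : (s.sort (· ≤ ·)).length = Multiset.card s := Multiset.length_sort _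
  have h2 : (s.sort (· ≤ ·)).sum = s.sum := by
    rw [← Multiset.sum_coe, Multiset.sort_eq]
  rw [h1, h2] at hs
  exact hs

lemma aux_map_sub_sum' (j : ℕ) (l : List ℕ) :
    (l.map (fun d : ℕ => (d : ℚ) - (j : ℚ))).sum = (l.sum : ℚ) - (j : ℚ) * l.length := by
  induction l with
  | nil => simp
  | cons a t ih =>
      simp only [List.map_cons, List.sum_cons, List.length_cons, ih]
      push_cast; ring

lemma aux_map_sub_sum (j : ℕ) (l : List ℕ) :
    (l.map (fun d => (d : ℚ) - (j : ℚ))).sum = (l.sum : ℚ) - (j : ℚ) * l.length := by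
  rw [← aux_map_sub_sum' j l]
  congr 1
  induction l with
  | nil => rfl
  | cons a t ih => simpa using ih

end ListLemmas

namespace DSI
variable {V : Type*} (G : SimpleGraph V) [Fintype V] [DecidableEq V] [DecidableRel G.Adj]

omit [DecidableEq V] in
lemma aux_dseq_length : (dseq G).length = Fintype.card V := by
  simp [dseq]

omit [DecidableEq V] in
lemma aux_dseq_sum : (dseq G).sum = ∑ v, G.degree v := by
  rw [dseq, ← Multiset.sum_coe, Multiset.sort_eq]
  rfl

omit [DecidableEq V] in
lemma aux_sumSmallest_le (B : Finset V) : sumSmallest G B.card ≤ ∑ v ∈ B, G.degree v := by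
  have h : (B.val.map (fun v => G.degree v)) ≤ (Finset.univ.val.map (fun v => G.degree v)) :=
    Multiset.map_le_map (Finset.val_le_iff.mpr (Finset.subset_univ B))
  have h2 := aux_multiset_take_sort h
  rw [Finset.sum_eq_multiset_sum]
  have hc : Multiset.card (B.val.map (fun v => G.degree v)) = B.card := by
    simp
  rw [hc] at h2
  exact h2

omit [DecidableEq V] in
lemma aux_sumLargest_add (k : ℕ) (hk : k ≤ Fintype.card V) :
    sumLargest G k + sumSmallest G (Fintype.card V - k) = (dseq G).sum := by
  rw [sumLargest, sumSmallest, List.take_reverse, List.sum_reverse, aux_dseq_length,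
    Nat.add_comm, List.sum_take_add_sum_drop]

lemma aux_sum_le_sumLargest (A : Finset V) : ∑ v ∈ A, G.degree v ≤ sumLargest G A.card := by
  have hsplit : ∑ v ∈ A, G.degree v + ∑ v ∈ Aᶜ, G.degree v = ∑ v, G.degree v :=
    Finset.sum_add_sum_compl A _
  have hS := aux_sumSmallest_le G Aᶜ
  have hLk := aux_sumLargest_add G A.card (by simpa using Finset.card_le_univ A)
  rw [Finset.card_compl] at hS
  rw [aux_dseq_sum] at hLk
  omega

lemma aux_jdom_bound {j : ℕ} {D : Finset V} (hD : DSI.JDom G j D) :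
    j * (Fintype.card V - D.card) ≤ sumLargest G D.card := by
  have h1 : j * Dᶜ.card ≤ ∑ v ∈ Dᶜ, (D.filter (fun w => G.Adj v w)).card := by
    calc j * Dᶜ.card = ∑ _v ∈ Dᶜ, j := by rw [Finset.sum_const, smul_eq_mul, mul_comm]
    _ ≤ _ := Finset.sum_le_sum (fun v hv => hD v (by simpa using hv))
  have h2 : ∑ v ∈ Dᶜ, (D.filter (fun w => G.Adj v w)).card
      = ∑ w ∈ D, (Dᶜ.filter (fun v => G.Adj v w)).card := by
    simp only [Finset.card_filter]
    exact Finset.sum_comm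
  have h3 : ∀ w ∈ D, (Dᶜ.filter (fun v => G.Adj v w)).card ≤ G.degree w := by
    intro w _
    rw [← SimpleGraph.card_neighborFinset_eq_degree]
    apply Finset.card_le_card
    intro v hv
    simp only [Finset.mem_filter] at hv
    rw [SimpleGraph.mem_neighborFinset]
    exact hv.2.symm
  have h4 := Finset.sum_le_sum h3
  have h5 := aux_sum_le_sumLargest G D
  rw [Finset.card_compl] at h1
  omega

end DSI

theorem gammaJ_ge_weak_index {V : Type*} (G : SimpleGraph V) [Fintype V]
    [DecidableEq V] [DecidableRel G.Adj] (j : ℕ) (hj : 1 ≤ j) :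
    sInf {k | k ≤ Fintype.card V ∧
        (DSI.esize G : ℚ) ≤ (DSI.sumLargest G k : ℚ) +
          (1 / 2) * (((DSI.dseq G).take (Fintype.card V - k)).map
            (fun d => (d : ℚ) - (j : ℚ))).sum} ≤
      DSI.gammaJ G j := by
  have hmem : ∃ D : Finset V, DSI.JDom G j D ∧ D.card = DSI.gammaJ G j := by
    have h := Nat.sInf_mem (s := {k | ∃ D : Finset V, DSI.JDom G j D ∧ D.card = k})
      ⟨Fintype.card V, Finset.univ, fun v hv => absurd (Finset.mem_univ v) hv, by simp⟩
    exact h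
  obtain ⟨D, hD, hDcard⟩ := hmem
  apply Nat.sInf_le
  have hgn : DSI.gammaJ G j ≤ Fintype.card V := by
    rw [← hDcard]; simpa using Finset.card_le_univ D
  refine ⟨hgn, ?_⟩
  have hjb : j * (Fintype.card V - DSI.gammaJ G j) ≤ DSI.sumLargest G (DSI.gammaJ G j) := by
    rw [← hDcard]
    exact DSI.aux_jdom_bound G hD
  have hLS : DSI.sumLargest G (DSI.gammaJ G j) +
      DSI.sumSmallest G (Fintype.card V - DSI.gammaJ G j) = 2 * DSI.esize G := by
    rw [DSI.aux_sumLargest_add G _ hgn, DSI.aux_dseq_sum]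
    exact G.sum_degrees_eq_twice_card_edges
  have hT : (((DSI.dseq G).take (Fintype.card V - DSI.gammaJ G j)).map
      (fun d => (d : ℚ) - (j : ℚ))).sum
      = (DSI.sumSmallest G (Fintype.card V - DSI.gammaJ G j) : ℚ)
        - (j : ℚ) * ((Fintype.card V - DSI.gammaJ G j : ℕ) : ℚ) := by
    rw [aux_map_sub_sum]
    have hlen : ((DSI.dseq G).take (Fintype.card V - DSI.gammaJ G j)).length
        = Fintype.card V - DSI.gammaJ G j := by
      rw [List.length_take, DSI.aux_dseq_length]
      omega
    rw [hlen]
    rfl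
  rw [hT]
  have h1 : (DSI.sumLargest G (DSI.gammaJ G j) : ℚ) +
      (DSI.sumSmallest G (Fintype.card V - DSI.gammaJ G j) : ℚ) = 2 * (DSI.esize G : ℚ) := by
    exact_mod_cast hLS
  have h2 : (j : ℚ) * ((Fintype.card V - DSI.gammaJ G j : ℕ) : ℚ) ≤
      (DSI.sumLargest G (DSI.gammaJ G j) : ℚ) := by
    exact_mod_cast hjb
  linarith
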